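/- Define F : ℂ² → ℝ³ by F(z,w) = (1/4)(|z|² − |w|², 2·Re(w·conj z), 2·Im(w·conj z)). For every 3×3 real matrix R with Rᵀ·R = 1 and det R = 1, there exists a 2×2 complex matrix g with g·g* = 1 and det g = 1 such that for all v ∈ ℂ², F(g·v) = R·(F v). -/

import Mathlib

set_option maxHeartbeats 1000000

/-- The (scaled) Hopf map `F : ℂ² → ℝ³` on column vectors,
`F(z,w) = (1/4)(|z|² − |w|², 2·Re(w·conj z), 2·Im(w·conj z))`. -/
noncomputable def hopfF (v : Fin 2 → ℂ) : Fin 3 → ℝ :=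
  ![(‖v 0‖ ^ 2 - ‖v 1‖ ^ 2) / 4,
    2 * (v 1 * (starRingEnd ℂ) (v 0)).re / 4,
    2 * (v 1 * (starRingEnd ℂ) (v 0)).im / 4]

section HopfAux
open Real Matrix

noncomputable def rotA (t : ℝ) : Matrix (Fin 3) (Fin 3) ℝ :=
  Matrix.of ![![1,0,0],![0, cos t, -sin t],![0, sin t, cos t]]
noncomputable def rotB (t : ℝ) : Matrix (Fin 3) (Fin 3) ℝ :=
  Matrix.of ![![cos t, -sin t, 0],![sin t, cos t, 0],![0,0,1]]
noncomputable def gD (t : ℝ) : Matrix (Fin 2) (Fin 2) ℂ :=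
  Matrix.of ![![(cos t : ℂ) + sin t * Complex.I, 0],![0, (cos t : ℂ) - sin t * Complex.I]]
noncomputable def gK (t : ℝ) : Matrix (Fin 2) (Fin 2) ℂ :=
  Matrix.of ![![(cos t : ℂ), -(sin t : ℂ)],![(sin t : ℂ), (cos t : ℂ)]]

lemma gD_hopf (t : ℝ) (v : Fin 2 → ℂ) :
    hopfF ((gD t).mulVec v) = (rotA (-(2*t))).mulVec (hopfF v) := by
  have h := sin_sq_add_cos_sq t
  funext i
  fin_cases i <;>
    simp [hopfF, rotA, gD, Matrix.mulVec, dotProduct, Fin.sum_univ_two,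
      Fin.sum_univ_three, Complex.sq_norm, Complex.normSq_apply, Complex.mul_re,
      Complex.mul_im, Complex.add_re, Complex.add_im, Complex.sub_re, Complex.sub_im,
      Complex.cos_ofReal_re, Complex.sin_ofReal_re, Complex.cos_ofReal_im,
      Complex.sin_ofReal_im, Real.cos_neg, Real.sin_neg, Real.cos_two_mul,
      Real.sin_two_mul, mul_pow] <;>
    ring_nf
  · linear_combination ((1 : ℝ) * ((v 1).re^2 + (v 1).im^2)) * h
  · linear_combination ((-1/2 : ℝ) * ((v 1).re*(v 0).re + (v 1).im*(v 0).im)) * h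
  · linear_combination ((1/2 : ℝ) * ((v 1).re*(v 0).im - (v 1).im*(v 0).re)) * h

lemma gK_hopf (t : ℝ) (v : Fin 2 → ℂ) :
    hopfF ((gK t).mulVec v) = (rotB (2*t)).mulVec (hopfF v) := by
  have h := sin_sq_add_cos_sq t
  funext i
  fin_cases i <;>
    simp [hopfF, rotB, gK, Matrix.mulVec, dotProduct, Fin.sum_univ_two,
      Fin.sum_univ_three, Complex.sq_norm, Complex.normSq_apply, Complex.mul_re,
      Complex.mul_im, Complex.add_re, Complex.add_im, Complex.sub_re, Complex.sub_im,
      Complex.cos_ofReal_re, Complex.sin_ofReal_re, Complex.cos_ofReal_im,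
      Complex.sin_ofReal_im, Real.cos_two_mul, Real.sin_two_mul, mul_pow] <;>
    ring_nf
  · linear_combination ((-1/4 : ℝ) * ((v 0).re^2 + (v 0).im^2 - (v 1).re^2 - (v 1).im^2)) * h
  · linear_combination ((-1/2 : ℝ) * ((v 1).re*(v 0).re + (v 1).im*(v 0).im)) * h
  · linear_combination ((1 : ℝ) * ((v 1).im*(v 0).re - (v 1).re*(v 0).im)) * h

lemma gD_unitary (t : ℝ) : gD t * (gD t).conjTranspose = 1 := by
  have h := sin_sq_add_cos_sq t
  ext i j
  fin_cases i <;> fin_cases j <;>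
    simp [gD, Matrix.mul_apply, Matrix.conjTranspose_apply, Fin.sum_univ_two,
      Complex.ext_iff, Complex.mul_re, Complex.mul_im, Complex.add_re, Complex.add_im,
      Complex.sub_re, Complex.sub_im, Complex.cos_ofReal_re, Complex.sin_ofReal_re,
      Complex.cos_ofReal_im, Complex.sin_ofReal_im] <;>
    (try constructor) <;> ring_nf <;> try linarith [h]

lemma gD_det (t : ℝ) : (gD t).det = 1 := by
  have h := sin_sq_add_cos_sq t
  simp [gD, Matrix.det_fin_two, Complex.ext_iff, Complex.mul_re, Complex.mul_im,
    Complex.add_re, Complex.add_im, Complex.sub_re, Complex.sub_im,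
    Complex.cos_ofReal_re, Complex.sin_ofReal_re, Complex.cos_ofReal_im,
    Complex.sin_ofReal_im]
  (try constructor) <;> ring_nf <;> try linarith [h]

lemma gK_unitary (t : ℝ) : gK t * (gK t).conjTranspose = 1 := by
  have h := sin_sq_add_cos_sq t
  ext i j
  fin_cases i <;> fin_cases j <;>
    simp [gK, Matrix.mul_apply, Matrix.conjTranspose_apply, Fin.sum_univ_two,
      Complex.ext_iff, Complex.mul_re, Complex.mul_im, Complex.add_re, Complex.add_im,
      Complex.sub_re, Complex.sub_im, Complex.cos_ofReal_re, Complex.sin_ofReal_re,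
      Complex.cos_ofReal_im, Complex.sin_ofReal_im] <;>
    (try constructor) <;> ring_nf <;> try linarith [h]

lemma gK_det (t : ℝ) : (gK t).det = 1 := by
  have h := sin_sq_add_cos_sq t
  simp [gK, Matrix.det_fin_two, Complex.ext_iff, Complex.mul_re, Complex.mul_im,
    Complex.cos_ofReal_re, Complex.sin_ofReal_re, Complex.cos_ofReal_im,
    Complex.sin_ofReal_im]
  (try constructor) <;> ring_nf <;> try linarith [h]

lemma rotA_orth (t : ℝ) : rotA t * (rotA t).transpose = 1 := by
  have h := sin_sq_add_cos_sq t
  ext i j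
  fin_cases i <;> fin_cases j <;>
    simp [rotA, Matrix.mul_apply, Matrix.transpose_apply, Fin.sum_univ_three] <;>
    (try constructor) <;> ring_nf <;> try linarith [h]

lemma rotB_orth (t : ℝ) : rotB t * (rotB t).transpose = 1 := by
  have h := sin_sq_add_cos_sq t
  ext i j
  fin_cases i <;> fin_cases j <;>
    simp [rotB, Matrix.mul_apply, Matrix.transpose_apply, Fin.sum_univ_three] <;>
    (try constructor) <;> ring_nf <;> try linarith [h]

lemma rotA_det (t : ℝ) : (rotA t).det = 1 := by
  have h := sin_sq_add_cos_sq t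
  simp [rotA, Matrix.det_fin_three]; (try constructor) <;> ring_nf <;> try linarith [h]

lemma rotB_det (t : ℝ) : (rotB t).det = 1 := by
  have h := sin_sq_add_cos_sq t
  simp [rotB, Matrix.det_fin_three]; (try constructor) <;> ring_nf <;> try linarith [h]

/-- a "half-unit" version: vector of norm r ≥ 0 -/

lemma polar {a b r : ℝ} (hr : 0 ≤ r) (h : a^2 + b^2 = r^2) :
    ∃ t : ℝ, r * cos t = a ∧ r * sin t = b := by
  refine ⟨Complex.arg ⟨a, b⟩, ?_, ?_⟩ <;>
  · have habs : ‖(⟨a, b⟩ : ℂ)‖ = r := by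
      rw [Complex.norm_def, Complex.normSq_mk,
        show a * a + b * b = r^2 by nlinarith]
      exact Real.sqrt_sq hr
    have hid := Complex.norm_mul_cos_add_sin_mul_I ⟨a, b⟩
    rw [habs] at hid
    have hre := congrArg Complex.re hid
    have him := congrArg Complex.im hid
    simp [Complex.mul_re, Complex.mul_im, Complex.add_re, Complex.add_im,
      Complex.cos_ofReal_re, Complex.sin_ofReal_re, Complex.cos_ofReal_im,
      Complex.sin_ofReal_im] at hre him
    first | exact hre | exact him

lemma so3_euler (R : Matrix (Fin 3) (Fin 3) ℝ) (hR : R.transpose * R = 1)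
    (hdet : R.det = 1) : ∃ α β γ : ℝ, R = rotA α * rotB β * rotA γ := by
  have hcol : R 0 0 ^ 2 + R 1 0 ^ 2 + R 2 0 ^ 2 = 1 := by
    have h00 := congrFun (congrFun hR 0) 0
    simp [Matrix.mul_apply, Matrix.transpose_apply, Fin.sum_univ_three,
      Matrix.one_apply] at h00
    nlinarith [h00]
  set β := Real.arccos (R 0 0) with hβdef
  have hc : cos β = R 0 0 := Real.cos_arccos (by nlinarith) (by nlinarith)
  have hs0 : 0 ≤ sin β := Real.sin_nonneg_of_nonneg_of_le_pi
    (Real.arccos_nonneg _) (Real.arccos_le_pi _)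
  have hssq : R 1 0 ^ 2 + R 2 0 ^ 2 = sin β ^ 2 := by
    have := sin_sq_add_cos_sq β
    rw [hc] at this; linarith
  obtain ⟨α, hα1, hα2⟩ := polar hs0 hssq
  obtain ⟨P, hPdef⟩ : ∃ P, P = rotA α * rotB β := ⟨_, rfl⟩
  have hPo : P * P.transpose = 1 := by
    rw [hPdef, Matrix.transpose_mul]
    calc rotA α * rotB β * ((rotB β).transpose * (rotA α).transpose)
        = rotA α * (rotB β * (rotB β).transpose) * (rotA α).transpose := by
          noncomm_ring
      _ = 1 := by rw [rotB_orth, mul_one, rotA_orth]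
  have hPo' : P.transpose * P = 1 := mul_eq_one_comm.mp hPo
  have hPcol : ∀ i, P i 0 = R i 0 := by
    intro i
    fin_cases i <;>
      simp [hPdef, rotA, rotB, Matrix.mul_apply, Fin.sum_univ_three] <;>
      first | linear_combination hc | linear_combination hα1 | linear_combination hα2
  obtain ⟨Q, hQdef⟩ : ∃ Q, Q = P.transpose * R := ⟨_, rfl⟩
  have hQcol : ∀ i, Q i 0 = (1 : Matrix (Fin 3) (Fin 3) ℝ) i 0 := by
    intro i
    have : Q i 0 = (P.transpose * P) i 0 := by
      rw [hQdef]
      simp only [Matrix.mul_apply, Matrix.transpose_apply]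
      exact Finset.sum_congr rfl fun k _ => by rw [hPcol k]
    rw [this, hPo']
  have q00 : Q 0 0 = 1 := by simpa [Matrix.one_apply] using hQcol 0
  have q10 : Q 1 0 = 0 := by simpa [Matrix.one_apply] using hQcol 1
  have q20 : Q 2 0 = 0 := by simpa [Matrix.one_apply] using hQcol 2
  have hQo : Q.transpose * Q = 1 := by
    rw [hQdef, Matrix.transpose_mul, Matrix.transpose_transpose]
    calc R.transpose * P * (P.transpose * R)
        = R.transpose * (P * P.transpose) * R := by noncomm_ring
      _ = 1 := by rw [hPo, mul_one, hR]
  have hQo' : Q * Q.transpose = 1 := mul_eq_one_comm.mp hQo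
  have hQdet : Q.det = 1 := by
    rw [hQdef, Matrix.det_mul, Matrix.det_transpose, hPdef, Matrix.det_mul,
      rotA_det, rotB_det, hdet]
    ring
  -- row 0 vanishes off-diagonal
  have row0 : Q 0 0 ^ 2 + Q 0 1 ^ 2 + Q 0 2 ^ 2 = 1 := by
    have h00 := congrFun (congrFun hQo' 0) 0
    simp [Matrix.mul_apply, Matrix.transpose_apply, Fin.sum_univ_three,
      Matrix.one_apply] at h00
    nlinarith [h00]
  have q01 : Q 0 1 = 0 := by
    have : Q 0 1 ^ 2 = 0 := by nlinarith [sq_nonneg (Q 0 1), sq_nonneg (Q 0 2)]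
    exact pow_eq_zero_iff (by norm_num) |>.mp this
  have q02 : Q 0 2 = 0 := by
    have : Q 0 2 ^ 2 = 0 := by nlinarith [sq_nonneg (Q 0 1), sq_nonneg (Q 0 2)]
    exact pow_eq_zero_iff (by norm_num) |>.mp this
  -- remaining 2x2 block is a rotation
  have col1 : Q 0 1 ^ 2 + Q 1 1 ^ 2 + Q 2 1 ^ 2 = 1 := by
    have h11 := congrFun (congrFun hQo 1) 1
    simp [Matrix.mul_apply, Matrix.transpose_apply, Fin.sum_univ_three,
      Matrix.one_apply] at h11
    nlinarith [h11]
  have col2 : Q 0 2 ^ 2 + Q 1 2 ^ 2 + Q 2 2 ^ 2 = 1 := by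
    have h22 := congrFun (congrFun hQo 2) 2
    simp [Matrix.mul_apply, Matrix.transpose_apply, Fin.sum_univ_three,
      Matrix.one_apply] at h22
    nlinarith [h22]
  have col12 : Q 0 1 * Q 0 2 + Q 1 1 * Q 1 2 + Q 2 1 * Q 2 2 = 0 := by
    have h12 := congrFun (congrFun hQo 1) 2
    simp [Matrix.mul_apply, Matrix.transpose_apply, Fin.sum_univ_three,
      Matrix.one_apply] at h12
    nlinarith [h12]
  have E1 : Q 1 1 ^ 2 + Q 2 1 ^ 2 = 1 := by rw [q01] at col1; nlinarith [col1]
  have E2 : Q 1 2 ^ 2 + Q 2 2 ^ 2 = 1 := by rw [q02] at col2; nlinarith [col2]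
  have E3 : Q 1 1 * Q 1 2 + Q 2 1 * Q 2 2 = 0 := by
    rw [q01, q02] at col12; nlinarith [col12]
  have E4 : Q 1 1 * Q 2 2 - Q 1 2 * Q 2 1 = 1 := by
    have hd := hQdet
    rw [Matrix.det_fin_three, q00, q10, q20, q01, q02] at hd
    linarith [hd]
  have hq22 : Q 2 2 = Q 1 1 := by
    linear_combination Q 1 1 * E2 - Q 2 2 * E4 - Q 1 2 * E3
  have hq12 : Q 1 2 = - Q 2 1 := by
    linear_combination Q 2 2 * E3 - Q 1 2 * E4 - Q 2 1 * E2
  obtain ⟨γ, hγ1, hγ2⟩ := polar zero_le_one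
    (show Q 1 1 ^ 2 + Q 2 1 ^ 2 = (1:ℝ) ^ 2 by rw [E1]; norm_num)
  rw [one_mul] at hγ1 hγ2
  refine ⟨α, β, γ, ?_⟩
  have hQA : Q = rotA γ := by
    ext i j
    fin_cases i <;> fin_cases j <;> simp only [rotA] <;>
      simp [Matrix.cons_val_zero, Matrix.cons_val_one, Matrix.vecHead, Matrix.vecTail] <;>
      linarith [q00, q01, q02, q10, q20, hq12, hq22, hγ1, hγ2]
  have hPQ : P * Q = R := by rw [hQdef, ← Matrix.mul_assoc, hPo, Matrix.one_mul]
  rw [← hPQ, hQA, hPdef]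

lemma su2_mul_unitary {g h : Matrix (Fin 2) (Fin 2) ℂ}
    (hg : g * g.conjTranspose = 1) (hh : h * h.conjTranspose = 1) :
    (g * h) * (g * h).conjTranspose = 1 := by
  rw [Matrix.conjTranspose_mul]
  calc g * h * (h.conjTranspose * g.conjTranspose)
      = g * (h * h.conjTranspose) * g.conjTranspose := by noncomm_ring
    _ = 1 := by rw [hh, mul_one, hg]

end HopfAux

/-- For each `R ∈ SO(3)` there is `g ∈ SU(2)` with `F(g·v) = R·(F v)` for all `v ∈ ℂ²`:
the covering `SU(2) → SO(3)` is surjective. -/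
theorem hopfF_cover_surjective (R : Matrix (Fin 3) (Fin 3) ℝ)
    (hR : R.transpose * R = 1) (hdet : R.det = 1) :
    ∃ g : Matrix (Fin 2) (Fin 2) ℂ, g * g.conjTranspose = 1 ∧ g.det = 1 ∧
      ∀ v : Fin 2 → ℂ, hopfF (g.mulVec v) = R.mulVec (hopfF v) := by
  obtain ⟨α, β, γ, hEuler⟩ := so3_euler R hR hdet
  refine ⟨gD (-(α/2)) * (gK (β/2) * gD (-(γ/2))), ?_, ?_, ?_⟩
  · exact su2_mul_unitary (gD_unitary _)
      (su2_mul_unitary (gK_unitary _) (gD_unitary _))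
  · rw [Matrix.det_mul, Matrix.det_mul, gD_det, gK_det, gD_det]; ring
  · intro v
    have ha : -(2 * -(α/2)) = α := by ring
    have hb : 2 * (β/2) = β := by ring
    have hg : -(2 * -(γ/2)) = γ := by ring
    rw [← Matrix.mulVec_mulVec, ← Matrix.mulVec_mulVec, gD_hopf, gK_hopf, gD_hopf,
      Matrix.mulVec_mulVec, Matrix.mulVec_mulVec, ha, hb, hg, ← hEuler]
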